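/- Let (A, B, R) be a VH-datum with parameters (m,n) and let M₁, M₂ be its transition matrices, regarded as integer matrices indexed by R×R, and let I be the identity matrix. Then the cokernel of the ℤ-linear map ℤ^R ⊕ ℤ^R → ℤ^R given by (x,y) ↦ (I−M₁)x + (I−M₂)y is isomorphic, as an abelian group, to the cokernel of the ℤ-linear map (x,y) ↦ (I−M₁ᵗ)x + (I−M₂ᵗ)y, where M_jᵗ denotes the transpose of M_j. -/

import Mathlib

/-- A VH-datum with parameters `(m,n)`: finite sets `A`, `B` of even
cardinalities `m, n ≥ 4` with fixed-point-free involutions, together with a set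
`R ⊆ A × B × B × A` satisfying the Burger–Mozes conditions (i)–(iii). -/
structure VHDatum (m n : ℕ) (A B : Type) [Fintype A] [Fintype B]
    [DecidableEq A] [DecidableEq B] where
  cardA : Fintype.card A = m
  cardB : Fintype.card B = n
  four_le_m : 4 ≤ m
  four_le_n : 4 ≤ n
  even_m : Even m
  even_n : Even n
  invA : A → A
  invB : B → B
  invA_invA : ∀ a, invA (invA a) = a
  invB_invB : ∀ b, invB (invB b) = b
  invA_ne : ∀ a, invA a ≠ a
  invB_ne : ∀ b, invB b ≠ b
  R : Finset (A × B × B × A)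
  cond_i : ∀ a b b' a', (a, b, b', a') ∈ R →
    (invA a, b', b, invA a') ∈ R ∧ (invA a', invB b', invB b, invA a) ∈ R ∧
    (a', invB b, invB b', a) ∈ R
  cond_ii : ∀ a b, (a, b, invB b, invA a) ∉ R
  cond_iii_ab : Set.BijOn (fun x : A × B × B × A => (x.1, x.2.1)) ↑R Set.univ
  cond_iii_ab' : Set.BijOn (fun x : A × B × B × A => (x.1, x.2.2.1)) ↑R Set.univ
  cond_iii_a'b : Set.BijOn (fun x : A × B × B × A => (x.2.2.2, x.2.1)) ↑R Set.univ
  cond_iii_a'b' : Set.BijOn (fun x : A × B × B × A => (x.2.2.2, x.2.2.1)) ↑R Set.univ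

variable {m n : ℕ} {A B : Type} [Fintype A] [Fintype B] [DecidableEq A] [DecidableEq B]

/-- The horizontal transition matrix `M₁`: for `r = (a,b,b′,a′)` and
`s = (c,d,d′,c′)` in `R`, `M₁(s,r) = 1` iff `d′ = b` and `c ≠ a⁻¹`. -/
def VHDatum.M1 (D : VHDatum m n A B) : Matrix D.R D.R ℤ := fun s r =>
  if (s : A × B × B × A).2.2.1 = (r : A × B × B × A).2.1 ∧
      (s : A × B × B × A).1 ≠ D.invA (r : A × B × B × A).1 then 1 else 0

/-- The vertical transition matrix `M₂`: for `r = (a,b,b′,a′)` and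
`s = (c,d,d′,c′)` in `R`, `M₂(s,r) = 1` iff `c = a′` and `d ≠ b⁻¹`. -/
def VHDatum.M2 (D : VHDatum m n A B) : Matrix D.R D.R ℤ := fun s r =>
  if (s : A × B × B × A).1 = (r : A × B × B × A).2.2.2 ∧
      (s : A × B × B × A).2.1 ≠ D.invB (r : A × B × B × A).2.1 then 1 else 0

open Matrix

namespace VHDatum

variable (D : VHDatum m n A B)

lemma invA_eq_comm {x y : A} : D.invA x = y ↔ x = D.invA y := by
  constructor <;> rintro rfl <;> simp [D.invA_invA]

lemma invB_eq_comm {x y : B} : D.invB x = y ↔ x = D.invB y := by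
  constructor <;> rintro rfl <;> simp [D.invB_invB]

lemma invA_inj {x y : A} : D.invA x = D.invA y ↔ x = y := by
  constructor
  · intro h; have := congrArg D.invA h; simpa [D.invA_invA] using this
  · rintro rfl; rfl

lemma invB_inj {x y : B} : D.invB x = D.invB y ↔ x = y := by
  constructor
  · intro h; have := congrArg D.invB h; simpa [D.invB_invB] using this
  · rintro rfl; rfl

/-- helper 1: given r=(a,b,b',a'), s=(c,d,d',c') in R with d = b',
  c = a⁻¹ ↔ c' = a'⁻¹ -/
lemma helper1 {a c a' c' : A} {b b' d d' : B}
    (hr : (a, b, b', a') ∈ D.R) (hs : (c, d, d', c') ∈ D.R) (hd : d = b') :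
    c = D.invA a ↔ c' = D.invA a' := by
  have ht : (D.invA a, b', b, D.invA a') ∈ D.R := (D.cond_i a b b' a' hr).1
  constructor
  · intro hc
    have h := D.cond_iii_ab.injOn (Finset.mem_coe.mpr hs) (Finset.mem_coe.mpr ht)
      (by simp [hc, hd])
    exact congrArg (fun x => x.2.2.2) h
  · intro hc'
    have h := D.cond_iii_a'b.injOn (Finset.mem_coe.mpr hs) (Finset.mem_coe.mpr ht)
      (by simp [hc', hd])
    exact congrArg (fun x => x.1) h

/-- helper 2: given r=(a,b,b',a'), s=(c,d,d',c') in R with c' = a,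
  d = b⁻¹ ↔ d' = b'⁻¹ -/
lemma helper2 {a c a' c' : A} {b b' d d' : B}
    (hr : (a, b, b', a') ∈ D.R) (hs : (c, d, d', c') ∈ D.R) (hc : c' = a) :
    d = D.invB b ↔ d' = D.invB b' := by
  have ht : (a', D.invB b, D.invB b', a) ∈ D.R := (D.cond_i a b b' a' hr).2.2
  constructor
  · intro hd
    have h := D.cond_iii_a'b.injOn (Finset.mem_coe.mpr hs) (Finset.mem_coe.mpr ht)
      (by simp [hc, hd])
    exact congrArg (fun x => x.2.2.1) h
  · intro hd'
    have h := D.cond_iii_a'b'.injOn (Finset.mem_coe.mpr hs) (Finset.mem_coe.mpr ht)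
      (by simp [hc, hd'])
    exact congrArg (fun x => x.2.1) h

def sigmaFun (x : A × B × B × A) : A × B × B × A :=
  (D.invA x.2.2.2, D.invB x.2.2.1, D.invB x.2.1, D.invA x.1)

lemma sigmaFun_mem {x : A × B × B × A} (hx : x ∈ D.R) : D.sigmaFun x ∈ D.R := by
  obtain ⟨a, b, b', a'⟩ := x
  exact (D.cond_i a b b' a' hx).2.1

def sigma : D.R ≃ D.R where
  toFun r := ⟨D.sigmaFun r.1, D.sigmaFun_mem r.2⟩
  invFun r := ⟨D.sigmaFun r.1, D.sigmaFun_mem r.2⟩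
  left_inv r := by
    apply Subtype.ext
    obtain ⟨⟨a, b, b', a'⟩, hr⟩ := r
    simp [sigmaFun, D.invA_invA, D.invB_invB]
  right_inv r := by
    apply Subtype.ext
    obtain ⟨⟨a, b, b', a'⟩, hr⟩ := r
    simp [sigmaFun, D.invA_invA, D.invB_invB]

lemma sigma_sigma (r : D.R) : D.sigma (D.sigma r) = r := D.sigma.left_inv r

lemma M1_transpose_eq (s r : D.R) : D.M1ᵀ s r = D.M1 (D.sigma s) (D.sigma r) := by
  obtain ⟨⟨a, b, b', a'⟩, hr⟩ := r
  obtain ⟨⟨c, d, d', c'⟩, hs⟩ := s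
  show D.M1 ⟨(a,b,b',a'), hr⟩ ⟨(c,d,d',c'), hs⟩ = _
  simp only [M1, sigma, sigmaFun, Equiv.coe_fn_mk]
  apply if_congr _ rfl rfl
  constructor
  · rintro ⟨h1, h2⟩
    have hd : d = b' := h1.symm
    refine ⟨by rw [hd], ?_⟩
    rw [D.invA_invA]
    intro hcon
    have hc' : c' = D.invA a' := D.invA_eq_comm.mp hcon
    have hc : c = D.invA a := (D.helper1 hr hs hd).mpr hc'
    exact h2 (D.invA_eq_comm.mp hc.symm)
  · rintro ⟨h1, h2⟩
    have hd : d = b' := D.invB_inj.mp h1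
    rw [D.invA_invA] at h2
    refine ⟨hd.symm, ?_⟩
    intro hcon
    have hc : c = D.invA a := D.invA_eq_comm.mp hcon.symm
    have hc' : c' = D.invA a' := (D.helper1 hr hs hd).mp hc
    exact h2 (D.invA_eq_comm.mpr hc')

lemma M2_transpose_eq (s r : D.R) : D.M2ᵀ s r = D.M2 (D.sigma s) (D.sigma r) := by
  obtain ⟨⟨a, b, b', a'⟩, hr⟩ := r
  obtain ⟨⟨c, d, d', c'⟩, hs⟩ := s
  show D.M2 ⟨(a,b,b',a'), hr⟩ ⟨(c,d,d',c'), hs⟩ = _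
  simp only [M2, sigma, sigmaFun, Equiv.coe_fn_mk]
  apply if_congr _ rfl rfl
  constructor
  · rintro ⟨h1, h2⟩
    have hc : c' = a := h1.symm
    refine ⟨by rw [hc], ?_⟩
    rw [D.invB_invB]
    intro hcon
    have hd' : d' = D.invB b' := D.invB_eq_comm.mp hcon
    have hd : d = D.invB b := (D.helper2 hr hs hc).mpr hd'
    exact h2 (D.invB_eq_comm.mp hd.symm)
  · rintro ⟨h1, h2⟩
    have hc : c' = a := D.invA_inj.mp h1
    rw [D.invB_invB] at h2
    refine ⟨hc.symm, ?_⟩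
    intro hcon
    have hd : d = D.invB b := D.invB_eq_comm.mp hcon.symm
    have hd' : d' = D.invB b' := (D.helper2 hr hs hc).mp hd
    exact h2 (D.invB_eq_comm.mpr hd')

end VHDatum

namespace VHDatum

variable (D : VHDatum m n A B)

def permEquiv : (D.R → ℤ) ≃ₗ[ℤ] (D.R → ℤ) where
  toFun x := fun s => x (D.sigma s)
  map_add' x y := rfl
  map_smul' c x := rfl
  invFun x := fun s => x (D.sigma s)
  left_inv x := funext fun s => by
    show x (D.sigma (D.sigma s)) = x s
    rw [sigma_sigma]
  right_inv x := funext fun s => by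
    show x (D.sigma (D.sigma s)) = x s
    rw [sigma_sigma]

lemma one_sub_M1_transpose (s r : D.R) :
    (1 - D.M1ᵀ) s r = (1 - D.M1) (D.sigma s) (D.sigma r) := by
  rw [Matrix.sub_apply, Matrix.sub_apply, D.M1_transpose_eq]
  congr 1
  rw [Matrix.one_apply, Matrix.one_apply]
  simp [D.sigma.injective.eq_iff]

lemma one_sub_M2_transpose (s r : D.R) :
    (1 - D.M2ᵀ) s r = (1 - D.M2) (D.sigma s) (D.sigma r) := by
  rw [Matrix.sub_apply, Matrix.sub_apply, D.M2_transpose_eq]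
  congr 1
  rw [Matrix.one_apply, Matrix.one_apply]
  simp [D.sigma.injective.eq_iff]

lemma mulVecLin_conj (M N : Matrix D.R D.R ℤ)
    (h : ∀ s r, N s r = M (D.sigma s) (D.sigma r)) :
    Matrix.mulVecLin N =
      D.permEquiv.toLinearMap ∘ₗ Matrix.mulVecLin M ∘ₗ D.permEquiv.toLinearMap := by
  apply LinearMap.ext; intro x
  funext s
  show (N *ᵥ x) s = (M *ᵥ (fun t => x (D.sigma t))) (D.sigma s)
  simp only [Matrix.mulVec, dotProduct]
  exact Fintype.sum_equiv D.sigma _ _ (fun r => by rw [h, sigma_sigma])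

lemma range_map (M N : Matrix D.R D.R ℤ)
    (h : ∀ s r, N s r = M (D.sigma s) (D.sigma r)) :
    Submodule.map (D.permEquiv : (D.R → ℤ) →ₗ[ℤ] (D.R → ℤ)) (LinearMap.range (Matrix.mulVecLin M)) =
      LinearMap.range (Matrix.mulVecLin N) := by
  rw [show Submodule.map (D.permEquiv : (D.R → ℤ) →ₗ[ℤ] (D.R → ℤ)) (LinearMap.range (Matrix.mulVecLin M)) =
      Submodule.map (D.permEquiv : (D.R → ℤ) →ₗ[ℤ] (D.R → ℤ))
      (LinearMap.range (Matrix.mulVecLin M)) from rfl,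
    D.mulVecLin_conj M N h, LinearMap.range_comp,
    LinearMap.range_comp_of_range_eq_top _ (LinearEquiv.range _)]

end VHDatum

open Matrix in
/-- the cokernel of `(x,y) ↦ (I−M₁)x + (I−M₂)y` on `ℤ^R ⊕ ℤ^R`
is isomorphic as an abelian group to the cokernel of
`(x,y) ↦ (I−M₁ᵗ)x + (I−M₂ᵗ)y`. -/
theorem VHDatum.coker_transpose (D : VHDatum m n A B) :
    Nonempty
      (((D.R → ℤ) ⧸ LinearMap.range
          (LinearMap.coprod (Matrix.mulVecLin (1 - D.M1))
            (Matrix.mulVecLin (1 - D.M2)))) ≃+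
       ((D.R → ℤ) ⧸ LinearMap.range
          (LinearMap.coprod (Matrix.mulVecLin (1 - D.M1ᵀ))
            (Matrix.mulVecLin (1 - D.M2ᵀ))))) := by
  refine ⟨(Submodule.Quotient.equiv _ _ D.permEquiv ?_).toAddEquiv⟩
  rw [LinearMap.range_coprod, LinearMap.range_coprod, Submodule.map_sup,
    D.range_map (1 - D.M1) (1 - D.M1ᵀ) D.one_sub_M1_transpose,
    D.range_map (1 - D.M2) (1 - D.M2ᵀ) D.one_sub_M2_transpose]
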